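/- Let p ≥ 1 be a real number and let a₁, a₂, b₁, b₂ be real numbers with a₁ ≤ a₂ and b₂ < b₁ (i.e., at the point x we have u₁(x) ≤ u₂(x) and at the point y we have u₁(y) > u₂(y)). Then |a₂ - b₁|^p + |a₁ - b₂|^p ≤ |a₁ - b₁|^p + |a₂ - b₂|^p. -/

import Mathlib

open Set

lemma abs_rpow_convexOn {p : ℝ} (hp : 1 ≤ p) :
    ConvexOn ℝ univ (fun x : ℝ => |x| ^ p) := by
  have himg : (fun x : ℝ => |x|) '' univ = Ici 0 := by
    ext y
    simp only [image_univ, mem_range, mem_Ici]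
    constructor
    · rintro ⟨x, rfl⟩; exact abs_nonneg x
    · intro hy; exact ⟨y, abs_of_nonneg hy⟩
  have hg : ConvexOn ℝ ((fun x : ℝ => |x|) '' univ) (fun x : ℝ => x ^ p) := by
    rw [himg]; exact convexOn_rpow hp
  have hmono : MonotoneOn (fun x : ℝ => x ^ p) ((fun x : ℝ => |x|) '' univ) := by
    rw [himg]
    intro x hx y hy hxy
    exact Real.rpow_le_rpow hx hxy (le_trans zero_le_one hp)
  have habs : ConvexOn ℝ univ (fun x : ℝ => |x|) := by
    convert convexOn_univ_norm (E := ℝ) using 1 <;> rfl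
  exact hg.comp habs hmono

lemma convex_slide {f : ℝ → ℝ} (hf : ConvexOn ℝ univ f) {u s v : ℝ}
    (h1 : u ≤ s) (h2 : s ≤ v) : f s + f (u + v - s) ≤ f u + f v := by
  rcases eq_or_lt_of_le (h1.trans h2) with heq | hlt
  · subst heq
    have hs : s = u := le_antisymm h2 h1
    subst hs
    norm_num
  · set θ := (s - u) / (v - u) with hθ
    have hvu : 0 < v - u := by linarith
    have hθ0 : 0 ≤ θ := div_nonneg (by linarith) hvu.le
    have hθ1 : θ ≤ 1 := (div_le_one hvu).2 (by linarith)
    have e : θ * (v - u) = s - u := by rw [hθ]; exact div_mul_cancel₀ _ hvu.ne'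
    have hs : s = (1 - θ) * u + θ * v := by
      linear_combination -e
    have ht : u + v - s = θ * u + (1 - θ) * v := by
      linear_combination e
    have h1' := hf.2 (mem_univ u) (mem_univ v) (by linarith : (0:ℝ) ≤ 1 - θ) hθ0 (by ring)
    have h2' := hf.2 (mem_univ u) (mem_univ v) hθ0 (by linarith : (0:ℝ) ≤ 1 - θ) (by ring)
    calc f s + f (u + v - s) ≤ ((1-θ) * f u + θ * f v) + (θ * f u + (1-θ) * f v) := by
          have ht2 : u + v - ((1 - θ) * u + θ * v) = θ * u + (1 - θ) * v := by ring
          rw [hs, ht2]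
          exact add_le_add (by simpa [smul_eq_mul] using h1') (by simpa [smul_eq_mul] using h2')
      _ = f u + f v := by ring

theorem warma_pointwise_inequality (p a₁ a₂ b₁ b₂ : ℝ) (hp : 1 ≤ p)
    (ha : a₁ ≤ a₂) (hb : b₂ < b₁) :
    |a₂ - b₁| ^ p + |a₁ - b₂| ^ p ≤ |a₁ - b₁| ^ p + |a₂ - b₂| ^ p := by
  have key := convex_slide (abs_rpow_convexOn hp)
    (u := a₁ - b₁) (s := a₂ - b₁) (v := a₂ - b₂) (by linarith) (by linarith)
  have : a₁ - b₁ + (a₂ - b₂) - (a₂ - b₁) = a₁ - b₂ := by ring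
  rw [this] at key
  linarith
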